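/- Let G be a topological group and H : G → [0,∞] a semi-norm (H(1)=0, H(g)=H(g⁻¹), H(gh) ≤ H(g)+H(h)). If inf over all x of limsup_{y→x} H(y) equals 0, then H is continuous. -/

import Mathlib

open scoped ENNReal
open Filter

/-- A semi-norm (graded subgroup) on a group `G`. -/
def IsGradedSubgroup {G : Type*} [Group G] (H : G → ℝ≥0∞) : Prop :=
  H 1 = 0 ∧ (∀ g : G, H g⁻¹ = H g) ∧ ∀ g h : G, H (g * h) ≤ H g + H h

/-- If `H` is a semi-norm on a topological group and the infimum over all `x`
of its u.s.c. envelope `H°(x) = limsup_{y→x} H(y)` is `0`, then `H` is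
continuous (hence clopen as a graded subgroup). -/
theorem gradedSubgroup_continuous_of_inf_interior {G : Type*} [Group G]
    [TopologicalSpace G] [IsTopologicalGroup G] (H : G → ℝ≥0∞)
    (hH : IsGradedSubgroup H)
    (h0 : (⨅ x : G, limsup H (nhds x)) = 0) :
    Continuous H := by
  obtain ⟨h1, hsymm, hsub⟩ := hH
  -- Step 1: H tends to 0 at 1
  have key : Filter.Tendsto H (nhds 1) (nhds 0) := by
    rw [ENNReal.tendsto_nhds_zero]
    intro ε hε
    have hε2 : (0 : ℝ≥0∞) < ε / 2 := ENNReal.half_pos hε.ne'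
    obtain ⟨x, hx⟩ : ∃ x : G, limsup H (nhds x) < ε / 2 := by
      have : (⨅ x : G, limsup H (nhds x)) < ε / 2 := h0 ▸ hε2
      exact iInf_lt_iff.mp this
    have hev : ∀ᶠ y in nhds x, H y < ε / 2 := eventually_lt_of_limsup_lt hx
    have hxlt : H x < ε / 2 := hev.self_of_nhds
    have hmap : Filter.Tendsto (fun h : G => h * x) (nhds 1) (nhds x) := by
      simpa using (continuous_mul_right x).tendsto 1
    filter_upwards [hmap.eventually hev] with h hh
    have hb : H h ≤ H (h * x) + H x⁻¹ := by
      simpa [mul_assoc] using hsub (h * x) x⁻¹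
    calc H h ≤ H (h * x) + H x⁻¹ := hb
      _ = H (h * x) + H x := by rw [hsymm]
      _ ≤ ε / 2 + ε / 2 := add_le_add hh.le hxlt.le
      _ = ε := ENNReal.add_halves ε
  -- Step 2: continuity at each g
  rw [continuous_iff_continuousAt]
  intro g
  have hmapg : Filter.Tendsto (fun y : G => g⁻¹ * y) (nhds g) (nhds 1) := by
    simpa using (continuous_mul_left g⁻¹).tendsto g
  have keyg : Filter.Tendsto (fun y : G => H (g⁻¹ * y)) (nhds g) (nhds 0) :=
    key.comp hmapg
  have hupper : ∀ y : G, H y ≤ H g + H (g⁻¹ * y) := fun y => by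
    simpa using hsub g (g⁻¹ * y)
  have hlower : ∀ y : G, H g ≤ H y + H (g⁻¹ * y) := fun y => by
    have := hsub y (y⁻¹ * g)
    have h2 : H (y⁻¹ * g) = H (g⁻¹ * y) := by
      rw [← hsymm (y⁻¹ * g), mul_inv_rev, inv_inv]
    simpa [h2] using this
  have hevle : ∀ ε : ℝ≥0∞, 0 < ε → ∀ᶠ y in nhds g, H (g⁻¹ * y) ≤ ε := by
    intro ε hε
    exact (ENNReal.tendsto_nhds_zero.mp keyg) ε hε
  unfold ContinuousAt
  by_cases htop : H g = ⊤
  · rw [htop]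
    have : ∀ᶠ y in nhds g, H y = ⊤ := by
      filter_upwards [hevle 1 zero_lt_one] with y hy
      by_contra hne
      have : H g < ⊤ := lt_of_le_of_lt (hlower y)
        (ENNReal.add_lt_top.mpr ⟨lt_top_iff_ne_top.mpr hne, lt_of_le_of_lt hy (by norm_num)⟩)
      exact absurd htop this.ne
    exact Filter.Tendsto.congr' (Filter.EventuallyEq.symm this) tendsto_const_nhds
  · rw [ENNReal.tendsto_nhds htop]
    intro ε hε
    filter_upwards [hevle ε hε] with y hy
    constructor
    · exact tsub_le_iff_right.mpr (le_trans (hlower y) (add_le_add le_rfl hy))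
    · exact le_trans (hupper y) (add_le_add le_rfl hy)
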